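/- Let X be a locally compact Tychonoff space, let C be a closed (hence compact) subspace of βX \ X, let Z be the quotient of βX collapsing C to a single point p, and let Y = X ∪ {p} ⊆ Z. Then Y is locally compact if and only if C is open in βX \ X. -/

import Mathlib

open Topology Set Filter unitInterval

/-- The setoid on `α` identifying all points of `C` with each other. -/
def collapseSetoid {α : Type} (C : Set α) : Setoid α where
  r x y := x = y ∨ (x ∈ C ∧ y ∈ C)
  iseqv := by
    refine ⟨fun _ => Or.inl rfl, ?_, ?_⟩
    · rintro x y (rfl | hc)
      · exact Or.inl rfl
      · exact Or.inr ⟨hc.2, hc.1⟩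
    · rintro x y z (rfl | hc) (rfl | hc')
      · exact Or.inl rfl
      · exact Or.inr hc'
      · exact Or.inr hc
      · exact Or.inr ⟨hc.1, hc'.2⟩

/-- For a T₃.₅ space, the unit into the Stone–Čech compactification is inducing. -/
lemma isInducing_stoneCechUnit_aux (X : Type) [TopologicalSpace X] [T35Space X] :
    IsInducing (stoneCechUnit : X → StoneCech X) := by
  refine isInducing_iff_nhds.mpr fun x => le_antisymm ?_ ?_
  · exact (continuous_stoneCechUnit.tendsto x).le_comap
  · intro U hU
    obtain ⟨W, hWU, hW, hxW⟩ := mem_nhds_iff.mp hU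
    obtain ⟨f, hf, hf0, hf1⟩ :=
      CompletelyRegularSpace.completely_regular x Wᶜ hW.isClosed_compl (by simpa using hxW)
    refine mem_comap.mpr ⟨{z | stoneCechExtend hf z ≠ 1}, ?_, ?_⟩
    · have hopen : IsOpen {z | stoneCechExtend hf z ≠ 1} := by
        have := (isClosed_singleton (x := (1 : I))).preimage (continuous_stoneCechExtend hf)
        simpa [Set.preimage, Set.compl_setOf] using this.isOpen_compl
      refine hopen.mem_nhds ?_
      have : stoneCechExtend hf (stoneCechUnit x) = f x :=
        congrFun (stoneCechExtend_extends hf) x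
      simp only [Set.mem_setOf_eq, this, hf0]
      exact zero_ne_one
    · intro z hz
      simp only [Set.mem_preimage, Set.mem_setOf_eq] at hz
      have hz' : f z ≠ 1 := by
        have : stoneCechExtend hf (stoneCechUnit z) = f z :=
          congrFun (stoneCechExtend_extends hf) z
        rwa [this] at hz
      by_contra hzU
      exact hz' (hf1 (by intro h; exact hzU (hWU h)))

/-- A dense, locally compact subset of a Hausdorff space is open. -/
lemma isOpen_of_dense_locallyCompact {Z : Type} [TopologicalSpace Z] [T2Space Z]
    {Y : Set Z} (hd : Dense Y) (hlc : LocallyCompactSpace Y) : IsOpen Y := by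
  rw [isOpen_iff_mem_nhds]
  intro y hy
  obtain ⟨K, hK, hKmem⟩ := exists_compact_mem_nhds (⟨y, hy⟩ : Y)
  have hKc : IsClosed (Subtype.val '' K) := (hK.image continuous_subtype_val).isClosed
  rw [mem_nhds_subtype] at hKmem
  obtain ⟨t, ht, hsub⟩ := hKmem
  obtain ⟨V, hVt, hV, hyV⟩ := mem_nhds_iff.mp ht
  have hVK : V ⊆ Subtype.val '' K := by
    refine (hd.open_subset_closure_inter hV).trans ?_
    have h1 : V ∩ Y ⊆ Subtype.val '' K := by
      rintro z ⟨hzV, hzY⟩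
      exact ⟨⟨z, hzY⟩, hsub (hVt hzV), rfl⟩
    calc closure (V ∩ Y) ⊆ closure (Subtype.val '' K) := closure_mono h1
      _ = Subtype.val '' K := hKc.closure_eq
  have hVY : V ⊆ Y := hVK.trans (by rintro z ⟨⟨w, hw⟩, _, rfl⟩; exact hw)
  exact mem_nhds_iff.mpr ⟨V, hVY, hV, hyV⟩

/-- The quotient of a T₄ space collapsing a closed set to a point is Hausdorff. -/
lemma t2Space_collapse {α : Type} [TopologicalSpace α] [T4Space α]
    {C : Set α} (hCc : IsClosed C) : T2Space (Quotient (collapseSetoid C)) := by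
  classical
  constructor
  intro a b hab
  induction a using Quotient.ind
  induction b using Quotient.ind
  rename_i x y
  have hr : ¬ (collapseSetoid C).r x y := fun h => hab (Quotient.sound h)
  have hxy : x ≠ y := fun h => hr (Or.inl h)
  have hnb : ¬ (x ∈ C ∧ y ∈ C) := fun h => hr (Or.inr h)
  set F1 : Set α := if x ∈ C then C else {x} with hF1
  set F2 : Set α := if y ∈ C then C else {y} with hF2
  have hF1c : IsClosed F1 := by rw [hF1]; split <;> [exact hCc; exact isClosed_singleton]
  have hF2c : IsClosed F2 := by rw [hF2]; split <;> [exact hCc; exact isClosed_singleton]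
  have hdisj : Disjoint F1 F2 := by
    rw [hF1, hF2]
    split <;> split <;> rename_i h1 h2
    · exact absurd ⟨h1, h2⟩ hnb
    · exact Set.disjoint_singleton_right.mpr h2
    · exact Set.disjoint_singleton_left.mpr h1
    · exact Set.disjoint_singleton_left.mpr (by simpa using hxy)
  obtain ⟨U, V, hU, hV, hF1U, hF2V, hUV⟩ := normal_separation hF1c hF2c hdisj
  set U' : Set α := if x ∈ C then U else U \ C with hU'
  set V' : Set α := if y ∈ C then V else V \ C with hV'
  have hU'o : IsOpen U' := by rw [hU']; split <;> [exact hU; exact hU.sdiff hCc]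
  have hV'o : IsOpen V' := by rw [hV']; split <;> [exact hV; exact hV.sdiff hCc]
  have hxU' : x ∈ U' := by
    rw [hU']; split <;> rename_i h
    · exact hF1U (by simp [hF1, h])
    · exact ⟨hF1U (by simp [hF1, h]), h⟩
  have hyV' : y ∈ V' := by
    rw [hV']; split <;> rename_i h
    · exact hF2V (by simp [hF2, h])
    · exact ⟨hF2V (by simp [hF2, h]), h⟩
  have hU'sat : ∀ z w, (collapseSetoid C).r z w → w ∈ U' → z ∈ U' := by
    rintro z w (rfl | ⟨hz, hw⟩) hwU
    · exact hwU
    · rw [hU'] at hwU ⊢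
      split <;> rename_i h
      · exact hF1U (by simpa [hF1, h] using hz)
      · rw [if_neg h] at hwU; exact absurd hw hwU.2
  have hV'sat : ∀ z w, (collapseSetoid C).r z w → w ∈ V' → z ∈ V' := by
    rintro z w (rfl | ⟨hz, hw⟩) hwV
    · exact hwV
    · rw [hV'] at hwV ⊢
      split <;> rename_i h
      · exact hF2V (by simpa [hF2, h] using hz)
      · rw [if_neg h] at hwV; exact absurd hw hwV.2
  have hpreU : Quotient.mk (collapseSetoid C) ⁻¹' (Quotient.mk (collapseSetoid C) '' U') = U' := by
    ext z
    constructor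
    · rintro ⟨w, hw, hq⟩
      exact hU'sat z w ((collapseSetoid C).symm (Quotient.exact hq)) hw
    · exact fun h => ⟨z, h, rfl⟩
  have hpreV : Quotient.mk (collapseSetoid C) ⁻¹' (Quotient.mk (collapseSetoid C) '' V') = V' := by
    ext z
    constructor
    · rintro ⟨w, hw, hq⟩
      exact hV'sat z w ((collapseSetoid C).symm (Quotient.exact hq)) hw
    · exact fun h => ⟨z, h, rfl⟩
  refine ⟨Quotient.mk _ '' U', Quotient.mk _ '' V', ?_, ?_, ⟨x, hxU', rfl⟩, ⟨y, hyV', rfl⟩, ?_⟩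
  · refine isQuotientMap_quotient_mk'.isOpen_preimage.mp ?_
    rw [show (@Quotient.mk' _ (collapseSetoid C)) = Quotient.mk (collapseSetoid C) from rfl, hpreU]
    exact hU'o
  · refine isQuotientMap_quotient_mk'.isOpen_preimage.mp ?_
    rw [show (@Quotient.mk' _ (collapseSetoid C)) = Quotient.mk (collapseSetoid C) from rfl, hpreV]
    exact hV'o
  · rw [Set.disjoint_left]
    rintro _ ⟨u, hu, rfl⟩ ⟨v, hv, hq⟩
    have hruv : (collapseSetoid C).r v u := Quotient.exact hq
    have huU : u ∈ U := by rw [hU'] at hu; split at hu <;> [exact hu; exact hu.1]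
    have hvV : v ∈ V := by rw [hV'] at hv; split at hv <;> [exact hv; exact hv.1]
    rcases hruv with rfl | ⟨hvC, huC⟩
    · exact Set.disjoint_left.mp hUV huU hvV
    · by_cases hx : x ∈ C
      · have hy : y ∉ C := fun h => hnb ⟨hx, h⟩
        rw [hV', if_neg hy] at hv
        exact hv.2 hvC
      · rw [hU', if_neg hx] at hu
        exact hu.2 huC

/-- Saturation of `R ∪ C` under the collapse setoid. -/
lemma preimage_image_union {α : Type} {C R : Set α} :
    Quotient.mk (collapseSetoid C) ⁻¹' (Quotient.mk (collapseSetoid C) '' (R ∪ C)) = R ∪ C := by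
  ext z
  constructor
  · rintro ⟨w, hw, hq⟩
    rcases Quotient.exact hq with h | ⟨hw', hz'⟩
    · exact h ▸ hw
    · exact Or.inr hz'
  · exact fun h => ⟨z, h, rfl⟩

/-- let `X` be locally compact Tychonoff, `C` a nonempty closed subset of
`βX \ X`, `Z` the quotient of `βX` collapsing `C` to a point, and `Y = X ∪ {p} ⊆ Z`.
Then `Y` is locally compact iff `C` is open in `βX \ X`. -/
theorem stmt13 (X : Type) [TopologicalSpace X] [T35Space X] [LocallyCompactSpace X]
    (C : Set (StoneCech X)) (hCc : IsClosed C) (hCne : C.Nonempty)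
    (hCrem : C ⊆ (Set.range (stoneCechUnit : X → StoneCech X))ᶜ) :
    LocallyCompactSpace
        ↥(Quotient.mk (collapseSetoid C) ''
            (Set.range (stoneCechUnit : X → StoneCech X) ∪ C)) ↔
      IsOpen {y : ↥((Set.range (stoneCechUnit : X → StoneCech X))ᶜ) |
        (y : StoneCech X) ∈ C} := by
  set R : Set (StoneCech X) := Set.range (stoneCechUnit : X → StoneCech X) with hR
  set q : StoneCech X → Quotient (collapseSetoid C) := Quotient.mk (collapseSetoid C) with hq
  haveI hT2Z : T2Space (Quotient (collapseSetoid C)) := t2Space_collapse hCc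
  -- `R` is a locally compact subspace:
  have hemb : Topology.IsEmbedding (stoneCechUnit : X → StoneCech X) :=
    ⟨isInducing_stoneCechUnit_aux X, injective_stoneCechUnit_of_t35Space⟩
  haveI hRlc : LocallyCompactSpace ↥R := by
    have h := (hemb.toHomeomorph).symm
    exact h.symm.locallyCompactSpace_iff.mp ‹_›
  -- `R` is open in `StoneCech X`:
  have hRdense : Dense R := denseRange_stoneCechUnit
  have hRopen : IsOpen R := isOpen_of_dense_locallyCompact hRdense hRlc
  -- the key set `{y : ↥Rᶜ | ↑y ∈ C}` is `val ⁻¹' C`: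
  have hkey : {y : ↥Rᶜ | (y : StoneCech X) ∈ C} = (Subtype.val : ↥Rᶜ → StoneCech X) ⁻¹' C := rfl
  constructor
  · intro hY
    -- Y is dense in Z
    have hqsurj : Function.Surjective q := fun z => Quotient.exists_rep z
    have hqd : DenseRange q := hqsurj.denseRange
    have hYdense : Dense (q '' (R ∪ C)) := by
      have h1 : Dense (q '' R) := hqd.dense_image continuous_quot_mk hRdense
      exact h1.mono (Set.image_mono Set.subset_union_left)
    have hYopen : IsOpen (q '' (R ∪ C)) := isOpen_of_dense_locallyCompact hYdense hY
    have hRCopen : IsOpen (R ∪ C) := by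
      have := isQuotientMap_quotient_mk'.isOpen_preimage.mpr hYopen
      rwa [show (@Quotient.mk' _ (collapseSetoid C)) = q from rfl, preimage_image_union] at this
    rw [hkey]
    have : (Subtype.val : ↥Rᶜ → StoneCech X) ⁻¹' C
        = (Subtype.val : ↥Rᶜ → StoneCech X) ⁻¹' (R ∪ C) := by
      ext ⟨z, hz⟩
      simp only [Set.mem_preimage, Set.mem_union]
      exact ⟨Or.inr, fun h => h.resolve_left hz⟩
    rw [this]
    exact hRCopen.preimage continuous_subtype_val
  · intro hC
    rw [hkey, isOpen_induced_iff] at hC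
    obtain ⟨U, hUo, hUC⟩ := hC
    have hCU : C = U ∩ Rᶜ := by
      ext z
      constructor
      · intro hz
        have hz' : z ∈ Rᶜ := hCrem hz
        have : (⟨z, hz'⟩ : ↥Rᶜ) ∈ Subtype.val ⁻¹' U := by
          rw [hUC]; exact hz
        exact ⟨this, hz'⟩
      · rintro ⟨hzU, hzR⟩
        have : (⟨z, hzR⟩ : ↥Rᶜ) ∈ Subtype.val ⁻¹' C := by
          rw [← hUC]; exact hzU
        exact this
    have hRC : R ∪ C = R ∪ U := by
      rw [hCU]
      ext z
      simp only [Set.mem_union, Set.mem_inter_iff, Set.mem_compl_iff]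
      constructor
      · rintro (h | ⟨h, _⟩) <;> [exact Or.inl h; exact Or.inr h]
      · rintro (h | h)
        · exact Or.inl h
        · by_cases hz : z ∈ R
          · exact Or.inl hz
          · exact Or.inr ⟨h, hz⟩
    have hRCopen : IsOpen (R ∪ C) := hRC ▸ hRopen.union hUo
    have hYopen : IsOpen (q '' (R ∪ C)) :=
      isQuotientMap_quotient_mk'.isOpen_preimage.mp
        (by rw [show (@Quotient.mk' _ (collapseSetoid C)) ⁻¹' (q '' (R ∪ C))
              = R ∪ C from preimage_image_union]; exact hRCopen)
    haveI : CompactSpace (Quotient (collapseSetoid C)) := Quotient.compactSpace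
    haveI : LocallyCompactSpace (Quotient (collapseSetoid C)) := inferInstance
    exact hYopen.locallyCompactSpace
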